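/- Let X be a real Banach space which is a 𝒦-space (with some constant), and let Y be a real Banach space which has the λ-bounded approximation property and is complemented in its bidual. Suppose C ≥ 0 is such that every bounded quasilinear map G : X → Y with constant 1 admits a (not necessarily continuous) linear map L : X → Y with ‖G(x) − L(x)‖ ≤ C‖x‖ for all x. Then every quasilinear map F : X → Y is trivial: there is a (not necessarily continuous) linear map L : X → Y with sup_{x≠0} ‖F(x) − L(x)‖/‖x‖ < ∞. In particular, if K₀(X,Y) is finite then K(X,Y) is finite. -/

import Mathlib

open Finset

/-- `F : X → Y` is quasilinear with constant `Q`. -/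
def IsQuasilinearWith {X Y : Type*} [NormedAddCommGroup X] [NormedSpace ℝ X]
    [NormedAddCommGroup Y] [NormedSpace ℝ Y] (Q : ℝ) (F : X → Y) : Prop :=
  (∀ (c : ℝ) (x : X), F (c • x) = c • F x) ∧
    ∀ x y : X, ‖F (x + y) - F x - F y‖ ≤ Q * (‖x‖ + ‖y‖)

/-- `X` has the `λ`-bounded approximation property: every finite-dimensional subspace
is fixed by a finite-rank operator of norm at most `λ`. -/
def HasBAPWith (lam : ℝ) (X : Type*) [NormedAddCommGroup X] [NormedSpace ℝ X] : Prop :=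
  ∀ E : Submodule ℝ X, FiniteDimensional ℝ E →
    ∃ u : X →L[ℝ] X, FiniteDimensional ℝ (LinearMap.range (u : X →ₗ[ℝ] X)) ∧
      ‖u‖ ≤ lam ∧ ∀ x ∈ E, u x = x

/-- `X` is a 𝒦-space with constant `K`: every real-valued homogeneous map with
quasilinearity constant 1 is at distance at most `K` from a (not necessarily
continuous) linear functional. -/
def IsKSpaceWith (K : ℝ) (X : Type*) [NormedAddCommGroup X] [NormedSpace ℝ X] : Prop :=
  ∀ f : X → ℝ, (∀ (c : ℝ) (x : X), f (c • x) = c * f x) →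
    (∀ x y : X, |f (x + y) - f x - f y| ≤ ‖x‖ + ‖y‖) →
    ∃ ℓ : X →ₗ[ℝ] ℝ, ∀ x : X, |f x - ℓ x| ≤ K * ‖x‖



set_option maxHeartbeats 1000000
set_option synthInstance.maxHeartbeats 200000

open Filter Topology

section ULim

variable {D : Type*}

/-- Limit of a function along an ultrafilter, when a limit exists. -/
noncomputable def myUlim (𝒰 : Ultrafilter D) (g : D → ℝ) : ℝ :=
  limUnder (𝒰 : Filter D) g

theorem tendsto_myUlim (𝒰 : Ultrafilter D) (g : D → ℝ) {B : ℝ}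
    (hB : ∀ d, |g d| ≤ B) : Tendsto g (𝒰 : Filter D) (nhds (myUlim 𝒰 g)) := by
  have hmem : (𝒰.map g : Filter ℝ) ≤ Filter.principal (Set.Icc (-B) B) := by
    refine Filter.le_principal_iff.2 ?_
    have : ∀ d, g d ∈ Set.Icc (-B) B := fun d => by
      rcases abs_le.1 (hB d) with ⟨h1, h2⟩; exact ⟨h1, h2⟩
    exact Filter.mem_map.2 (Filter.univ_mem' this)
  obtain ⟨a, -, ha⟩ := isCompact_Icc.ultrafilter_le_nhds (𝒰.map g) hmem
  have hex : ∃ a : ℝ, Tendsto g (𝒰 : Filter D) (nhds a) := ⟨a, ha⟩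
  exact tendsto_nhds_limUnder hex
end ULim

section FinRank

variable {X Y : Type*} [NormedAddCommGroup X] [NormedSpace ℝ X]
  [NormedAddCommGroup Y] [NormedSpace ℝ Y]

/-- A quasilinear map with finite-dimensional range into a 𝒦-space domain is trivial. -/
theorem finite_rank_trivial {K : ℝ} (hK : IsKSpaceWith K X)
    (W : Submodule ℝ Y) [FiniteDimensional ℝ W] {q : ℝ} (hq : 0 ≤ q)
    (G : X → Y) (hh : ∀ (c : ℝ) (x : X), G (c • x) = c • G x)
    (hadd : ∀ x y : X, ‖G (x + y) - G x - G y‖ ≤ q * (‖x‖ + ‖y‖))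
    (hmem : ∀ x, G x ∈ W) :
    ∃ (L : X →ₗ[ℝ] Y) (c : ℝ), 0 ≤ c ∧ ∀ x, ‖G x - L x‖ ≤ c * ‖x‖ := by
  classical
  set G' : X → W := fun x => ⟨G x, hmem x⟩ with hG'
  have hG'h : ∀ (c : ℝ) (x : X), G' (c • x) = c • G' x := by
    intro c x; apply Subtype.ext; simp [G', hh c x]
  have hG'norm : ∀ x y : X, ‖G' (x + y) - G' x - G' y‖ ≤ q * (‖x‖ + ‖y‖) := by
    intro x y
    have : ((G' (x+y) - G' x - G' y : W) : Y) = G (x+y) - G x - G y := by simp [G']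
    rw [← Submodule.norm_coe (G' (x+y) - G' x - G' y)] at *
    rw [this]; exact hadd x y
  let b := Module.finBasis ℝ W
  let φ : Fin (Module.finrank ℝ W) → W →L[ℝ] ℝ := fun i =>
    LinearMap.toContinuousLinearMap (b.coord i)
  have hf : ∀ i x y, |φ i (G' (x + y)) - φ i (G' x) - φ i (G' y)|
      ≤ (‖φ i‖ * q) * (‖x‖ + ‖y‖) := by
    intro i x y
    have : φ i (G' (x+y)) - φ i (G' x) - φ i (G' y) = φ i (G' (x+y) - G' x - G' y) := by
      simp
    rw [this]
    calc |φ i (G' (x+y) - G' x - G' y)| ≤ ‖φ i‖ * ‖G' (x+y) - G' x - G' y‖ :=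
          (φ i).le_opNorm _
      _ ≤ ‖φ i‖ * (q * (‖x‖ + ‖y‖)) := by
          exact mul_le_mul_of_nonneg_left (hG'norm x y) (norm_nonneg (φ i))
      _ = (‖φ i‖ * q) * (‖x‖ + ‖y‖) := by ring
  -- scale and apply the K-space property coordinatewise
  have key : ∀ i, ∃ ℓ : X →ₗ[ℝ] ℝ, ∀ x, |φ i (G' x) - ℓ x| ≤ |(‖φ i‖ * q + 1) * K| * ‖x‖ := by
    intro i
    set a : ℝ := ‖φ i‖ * q + 1 with ha
    have ha0 : 0 < a := by positivity
    have haq : ‖φ i‖ * q ≤ a := by linarith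
    obtain ⟨ℓ, hℓ⟩ := hK (fun x => φ i (G' x) / a)
      (by
        intro c x
        show (φ i) (G' (c • x)) / a = c * ((φ i) (G' x) / a)
        rw [hG'h c x, map_smul]
        simp [mul_div_assoc])
      (by
        intro x y
        rw [div_sub_div_same, div_sub_div_same, abs_div, abs_of_pos ha0]
        rw [div_le_iff₀ ha0]
        calc |φ i (G' (x+y)) - φ i (G' x) - φ i (G' y)| ≤ (‖φ i‖ * q) * (‖x‖ + ‖y‖) :=
              hf i x y
          _ ≤ (‖x‖ + ‖y‖) * a := by
              rw [mul_comm (‖x‖ + ‖y‖) a]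
              exact mul_le_mul_of_nonneg_right haq (by positivity))
    refine ⟨a • ℓ, fun x => ?_⟩
    have h1 : |φ i (G' x) / a - ℓ x| ≤ K * ‖x‖ := hℓ x
    have h2 : |φ i (G' x) - (a • ℓ) x| = a * |φ i (G' x) / a - ℓ x| := by
      have h3 : φ i (G' x) - (a • ℓ) x = a * (φ i (G' x) / a - ℓ x) := by
        rw [LinearMap.smul_apply, smul_eq_mul]
        field_simp
      rw [h3, abs_mul, abs_of_pos ha0]
    rw [h2]
    calc a * |φ i (G' x) / a - ℓ x| ≤ a * (K * ‖x‖) := by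
          exact mul_le_mul_of_nonneg_left h1 ha0.le
      _ = (a * K) * ‖x‖ := by ring
      _ ≤ |a * K| * ‖x‖ := by
          exact mul_le_mul_of_nonneg_right (le_abs_self _) (norm_nonneg _)
  choose ℓ hℓ using key
  refine ⟨∑ i, LinearMap.smulRight (ℓ i) ((b i : W) : Y),
    ∑ i, |(‖φ i‖ * q + 1) * K| * ‖((b i : W) : Y)‖, ?_, ?_⟩
  · exact Finset.sum_nonneg fun i _ => by positivity
  · intro x
    have hrepr : (G' x : Y) = ∑ i, φ i (G' x) • ((b i : W) : Y) := by
      conv_lhs => rw [← b.sum_repr (G' x)]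
      push_cast
      rfl
    have hL : (∑ i, LinearMap.smulRight (ℓ i) ((b i : W) : Y)) x
        = ∑ i, ℓ i x • ((b i : W) : Y) := by
      simp
    have hGx : G x = (G' x : Y) := rfl
    rw [hGx, hL, hrepr, ← Finset.sum_sub_distrib]
    have hterm : ∀ i, φ i (G' x) • ((b i : W) : Y) - ℓ i x • ((b i : W) : Y)
        = (φ i (G' x) - ℓ i x) • ((b i : W) : Y) := fun i => (sub_smul _ _ _).symm
    simp_rw [hterm]
    calc ‖∑ i, (φ i (G' x) - ℓ i x) • ((b i : W) : Y)‖
        ≤ ∑ i, ‖(φ i (G' x) - ℓ i x) • ((b i : W) : Y)‖ := norm_sum_le _ _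
      _ ≤ ∑ i, (|(‖φ i‖ * q + 1) * K| * ‖((b i : W) : Y)‖) * ‖x‖ := by
          refine Finset.sum_le_sum fun i _ => ?_
          rw [norm_smul, Real.norm_eq_abs]
          calc |φ i (G' x) - ℓ i x| * ‖((b i : W) : Y)‖
              ≤ (|(‖φ i‖ * q + 1) * K| * ‖x‖) * ‖((b i : W) : Y)‖ :=
                mul_le_mul_of_nonneg_right (hℓ i x) (norm_nonneg _)
            _ = (|(‖φ i‖ * q + 1) * K| * ‖((b i : W) : Y)‖) * ‖x‖ := by ring
      _ = (∑ i, |(‖φ i‖ * q + 1) * K| * ‖((b i : W) : Y)‖) * ‖x‖ :=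
          (Finset.sum_mul _ _ _).symm
end FinRank

/-- if `X` is a 𝒦-space, `Y` has the `λ`-BAP and is complemented in its
bidual, and every bounded quasilinear map `X → Y` with constant 1 is at distance at most
`C` from a linear map, then every quasilinear map `F : X → Y` is trivial; in particular,
if `K₀(X,Y)` is finite then so is `K(X,Y)`. -/
theorem K_finite_of_K0_finite_of_KSpace {X Y : Type*} [NormedAddCommGroup X]
    [NormedSpace ℝ X] [CompleteSpace X] [NormedAddCommGroup Y] [NormedSpace ℝ Y]
    [CompleteSpace Y] (hX : ∃ K : ℝ, IsKSpaceWith K X)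
    (lam : ℝ) (hBAP : HasBAPWith lam Y)
    (hbidual : ∃ p : StrongDual ℝ (StrongDual ℝ Y) →L[ℝ] Y,
      ∀ y : Y, p (NormedSpace.inclusionInDoubleDual ℝ Y y) = y)
    (C : ℝ) (hC : 0 ≤ C)
    (h0 : ∀ G : X → Y, IsQuasilinearWith 1 G → (∃ M : ℝ, ∀ x : X, ‖G x‖ ≤ M * ‖x‖) →
      ∃ L : X →ₗ[ℝ] Y, ∀ x : X, ‖G x - L x‖ ≤ C * ‖x‖)
    (F : X → Y) (hF : ∃ Q : ℝ, IsQuasilinearWith Q F) :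
    ∃ (L : X →ₗ[ℝ] Y) (M : ℝ), ∀ x : X, ‖F x - L x‖ ≤ M * ‖x‖ := by
  classical
  obtain ⟨K, hK⟩ := hX
  obtain ⟨p, hp⟩ := hbidual
  obtain ⟨Q, hFh, hFadd⟩ := hF
  set Q' : ℝ := max Q 1 with hQ'
  have hQ'pos : (0:ℝ) < Q' := lt_of_lt_of_le one_pos (le_max_right _ _)
  have hFadd' : ∀ x y : X, ‖F (x + y) - F x - F y‖ ≤ Q' * (‖x‖ + ‖y‖) := fun x y =>
    (hFadd x y).trans (mul_le_mul_of_nonneg_right (le_max_left _ _) (by positivity))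
  have hlam : 0 ≤ lam := by
    obtain ⟨u, -, hu, -⟩ := hBAP ⊥ inferInstance
    exact (norm_nonneg u).trans hu
  set q : ℝ := lam * Q' with hq
  have hq0 : 0 ≤ q := mul_nonneg hlam hQ'pos.le
  have hq1 : (0:ℝ) < q + 1 := by positivity
  set M₀ : ℝ := (q + 1) * C with hM₀
  have hM₀0 : 0 ≤ M₀ := mul_nonneg (by positivity) hC
  -- Step 1: approximate u ∘ F by a linear map, uniformly over the BAP operators u
  have key : ∀ E : Submodule ℝ Y, FiniteDimensional ℝ E →
      ∃ (u : Y →L[ℝ] Y) (Λ : X →ₗ[ℝ] Y), (∀ y ∈ E, u y = y) ∧ ‖u‖ ≤ lam ∧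
        ∀ x, ‖u (F x) - Λ x‖ ≤ M₀ * ‖x‖ := by
    intro E hE
    obtain ⟨u, hfin, hunorm, hfix⟩ := hBAP E hE
    haveI := hfin
    have hGh : ∀ (c : ℝ) (x : X), u (F (c • x)) = c • u (F x) := by
      intro c x; rw [hFh c x, map_smul]
    have hGadd : ∀ x y : X, ‖u (F (x + y)) - u (F x) - u (F y)‖ ≤ q * (‖x‖ + ‖y‖) := by
      intro x y
      calc ‖u (F (x+y)) - u (F x) - u (F y)‖ = ‖u (F (x+y) - F x - F y)‖ := by
            rw [map_sub, map_sub]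
        _ ≤ ‖u‖ * ‖F (x+y) - F x - F y‖ := u.le_opNorm _
        _ ≤ lam * (Q' * (‖x‖ + ‖y‖)) :=
            mul_le_mul hunorm (hFadd' x y) (norm_nonneg _) hlam
        _ = q * (‖x‖ + ‖y‖) := by rw [hq]; ring
    obtain ⟨L, c, hc0, hL⟩ := finite_rank_trivial hK (LinearMap.range (u : Y →ₗ[ℝ] Y))
      hq0 (fun x => u (F x)) hGh hGadd (fun x => LinearMap.mem_range_self _ _)
    set H : X → Y := fun x => (q + 1)⁻¹ • (u (F x) - L x) with hH
    have hHq : IsQuasilinearWith 1 H := by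
      constructor
      · intro c x
        show (q + 1)⁻¹ • (u (F (c • x)) - L (c • x)) = c • ((q + 1)⁻¹ • (u (F x) - L x))
        rw [hGh c x, map_smul, ← smul_sub, smul_comm]
      · intro x y
        have hdif : H (x+y) - H x - H y = (q+1)⁻¹ • (u (F (x+y)) - u (F x) - u (F y)) := by
          show (q + 1)⁻¹ • (u (F (x+y)) - L (x+y)) - (q + 1)⁻¹ • (u (F x) - L x)
              - (q + 1)⁻¹ • (u (F y) - L y) = _
          rw [← smul_sub, ← smul_sub]
          congr 1
          rw [map_add]
          abel
        rw [hdif, norm_smul, Real.norm_eq_abs, abs_of_pos (inv_pos.2 hq1)]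
        calc (q+1)⁻¹ * ‖u (F (x+y)) - u (F x) - u (F y)‖
            ≤ (q+1)⁻¹ * ((q+1) * (‖x‖ + ‖y‖)) := by
              refine mul_le_mul_of_nonneg_left ((hGadd x y).trans ?_) (inv_pos.2 hq1).le
              refine mul_le_mul_of_nonneg_right (by linarith) (by positivity)
          _ = 1 * (‖x‖ + ‖y‖) := by
              rw [← mul_assoc, inv_mul_cancel₀ hq1.ne']
    have hHb : ∃ M : ℝ, ∀ x, ‖H x‖ ≤ M * ‖x‖ := by
      refine ⟨(q+1)⁻¹ * c, fun x => ?_⟩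
      show ‖(q + 1)⁻¹ • (u (F x) - L x)‖ ≤ (q+1)⁻¹ * c * ‖x‖
      rw [norm_smul, Real.norm_eq_abs, abs_of_pos (inv_pos.2 hq1), mul_assoc]
      exact mul_le_mul_of_nonneg_left (hL x) (inv_pos.2 hq1).le
    obtain ⟨Λ', hΛ'⟩ := h0 H hHq hHb
    refine ⟨u, L + (q+1) • Λ', hfix, hunorm, fun x => ?_⟩
    have hrw : u (F x) - (L + (q+1) • Λ') x = (q+1) • (H x - Λ' x) := by
      rw [LinearMap.add_apply, LinearMap.smul_apply, hH]
      rw [smul_sub, smul_smul, mul_inv_cancel₀ hq1.ne', one_smul]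
      abel
    rw [hrw, norm_smul, Real.norm_eq_abs, abs_of_pos hq1]
    calc (q+1) * ‖H x - Λ' x‖ ≤ (q+1) * (C * ‖x‖) :=
          mul_le_mul_of_nonneg_left (hΛ' x) hq1.le
      _ = M₀ * ‖x‖ := by rw [hM₀]; ring
  -- Step 2: ultrafilter over the directed set of finite-dimensional subspaces of Y
  let D := {E : Submodule ℝ Y // FiniteDimensional ℝ E}
  haveI : Nonempty D := ⟨⟨⊥, inferInstance⟩⟩
  let S : D → Set D := fun E₀ => {E | E₀.1 ≤ E.1}
  let ℱ : Filter D := ⨅ E₀, Filter.principal (S E₀)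
  haveI hℱ : ℱ.NeBot := by
    refine Filter.iInf_neBot_of_directed ?_ ?_
    · intro E₀ E₁
      haveI := E₀.2; haveI := E₁.2
      refine ⟨⟨E₀.1 ⊔ E₁.1, inferInstance⟩, ?_, ?_⟩
      · refine Filter.principal_mono.2 fun E hE => ?_
        simp only [S, Set.mem_setOf_eq] at hE ⊢
        exact le_trans le_sup_left hE
      · refine Filter.principal_mono.2 fun E hE => ?_
        simp only [S, Set.mem_setOf_eq] at hE ⊢
        exact le_trans le_sup_right hE
    · intro E₀
      exact Filter.principal_neBot_iff.2 ⟨E₀, le_refl E₀.1⟩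
  let 𝒰 : Ultrafilter D := Ultrafilter.of ℱ
  have h𝒰 : (𝒰 : Filter D) ≤ ℱ := Ultrafilter.of_le ℱ
  have hev : ∀ E₀ : D, ∀ᶠ E in (𝒰 : Filter D), E₀.1 ≤ E.1 := fun E₀ =>
    h𝒰 (Filter.mem_iInf_of_mem E₀ (Filter.mem_principal_self _))
  choose u Λ hfix hunorm hbound using fun E : D => key E.1 E.2
  have hΛnorm : ∀ (x : X) (E : D), ‖Λ E x‖ ≤ lam * ‖F x‖ + M₀ * ‖x‖ := by
    intro x E
    calc ‖Λ E x‖ = ‖u E (F x) - (u E (F x) - Λ E x)‖ := by congr 1; abel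
      _ ≤ ‖u E (F x)‖ + ‖u E (F x) - Λ E x‖ := norm_sub_le _ _
      _ ≤ lam * ‖F x‖ + M₀ * ‖x‖ := by
          refine add_le_add (((u E).le_opNorm _).trans ?_) (hbound E x)
          exact mul_le_mul_of_nonneg_right (hunorm E) (norm_nonneg _)
  have hg : ∀ (x : X) (ψ : StrongDual ℝ Y) (E : D),
      |ψ (Λ E x)| ≤ ‖ψ‖ * (lam * ‖F x‖ + M₀ * ‖x‖) := fun x ψ E =>
    (ψ.le_opNorm _).trans (mul_le_mul_of_nonneg_left (hΛnorm x E) (norm_nonneg ψ))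
  have htend : ∀ (x : X) (ψ : StrongDual ℝ Y),
      Filter.Tendsto (fun E => ψ (Λ E x)) (𝒰 : Filter D)
        (nhds (myUlim 𝒰 (fun E => ψ (Λ E x)))) :=
    fun x ψ => tendsto_myUlim 𝒰 _ (hg x ψ)
  -- the weak* limit operator T : X → Y**
  let T : X → StrongDual ℝ (StrongDual ℝ Y) := fun x =>
    LinearMap.mkContinuous
      { toFun := fun ψ => myUlim 𝒰 (fun E => ψ (Λ E x))
        map_add' := by
          intro ψ χ
          refine tendsto_nhds_unique ?_ ((htend x ψ).add (htend x χ))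
          have hfun : (fun E : D => (ψ + χ) (Λ E x))
              = fun E => ψ (Λ E x) + χ (Λ E x) := rfl
          exact hfun ▸ htend x (ψ + χ)
        map_smul' := by
          intro c ψ
          refine tendsto_nhds_unique ?_ ((htend x ψ).const_mul c)
          have hfun : (fun E : D => (c • ψ) (Λ E x))
              = fun E => c * ψ (Λ E x) := rfl
          exact hfun ▸ htend x (c • ψ) }
      (lam * ‖F x‖ + M₀ * ‖x‖)
      (fun ψ => by
        have habs : |myUlim 𝒰 (fun E => ψ (Λ E x))| ≤ ‖ψ‖ * (lam * ‖F x‖ + M₀ * ‖x‖) :=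
          le_of_tendsto (htend x ψ).abs (Filter.Eventually.of_forall (hg x ψ))
        calc ‖myUlim 𝒰 (fun E => ψ (Λ E x))‖ = |myUlim 𝒰 (fun E => ψ (Λ E x))| := rfl
          _ ≤ ‖ψ‖ * (lam * ‖F x‖ + M₀ * ‖x‖) := habs
          _ = (lam * ‖F x‖ + M₀ * ‖x‖) * ‖ψ‖ := mul_comm _ _)
  have hTapp : ∀ (x : X) (ψ : StrongDual ℝ Y),
      T x ψ = myUlim 𝒰 (fun E => ψ (Λ E x)) := fun x ψ => rfl
  have hpb : ∃ Cp : ℝ, 0 ≤ Cp ∧ ∀ z, ‖p z‖ ≤ Cp * ‖z‖ := by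
    obtain ⟨δ, hδ, hδp⟩ := Metric.continuous_iff.1 p.continuous (0 : StrongDual ℝ (StrongDual ℝ Y)) 1 one_pos
    refine ⟨2 / δ, by positivity, fun z => ?_⟩
    rcases eq_or_ne z 0 with hz | hz
    · subst hz
      have h0 : p 0 = 0 := map_zero p
      rw [h0, norm_zero]; exact mul_nonneg (by positivity) (ContinuousLinearMap.opNorm_nonneg _)
    have hzn : 0 < ‖z‖ := lt_of_le_of_ne (ContinuousLinearMap.opNorm_nonneg z) (Ne.symm (fun h => hz ((ContinuousLinearMap.opNorm_zero_iff z).1 h)))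
    set t : ℝ := δ / (2 * ‖z‖) with ht
    have ht0 : 0 < t := by positivity
    have hw : dist (t • z) 0 < δ := by
      have e : dist (t • z) 0 ≤ ‖t‖ * ‖z‖ := by
        exact (dist_zero_right _).le.trans (ContinuousLinearMap.opNorm_smul_le t z)
      refine lt_of_le_of_lt e ?_
      rw [Real.norm_eq_abs, abs_of_pos ht0, ht]
      field_simp
      linarith
    have h1 := hδp (t • z) hw
    have hs : p (t • z) = t • p z := map_smul p t z
    have h00 : p 0 = 0 := map_zero p
    rw [hs, h00, dist_zero_right, norm_smul, Real.norm_eq_abs, abs_of_pos ht0] at h1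
    rw [ht] at h1
    rw [div_mul_eq_mul_div, le_div_iff₀ hδ]
    have : δ * ‖p z‖ < 2 * ‖z‖ := by
      rw [div_mul_eq_mul_div, div_lt_one (by positivity)] at h1; linarith
    linarith
  obtain ⟨Cp, hCp0, hCp⟩ := hpb
  -- the linear map L = p ∘ T
  refine ⟨{ toFun := fun x => p (T x)
            map_add' := by
              intro x y
              show p (T (x + y)) = p (T x) + p (T y)
              rw [← map_add]
              congr 1
              refine ContinuousLinearMap.ext fun ψ => ?_
              rw [ContinuousLinearMap.add_apply, hTapp, hTapp, hTapp]
              refine tendsto_nhds_unique ?_ ((htend x ψ).add (htend y ψ))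
              have hfun : (fun E : D => ψ (Λ E (x + y)))
                  = fun E => ψ (Λ E x) + ψ (Λ E y) := by
                funext E; rw [map_add, map_add]
              exact hfun ▸ htend (x + y) ψ
            map_smul' := by
              intro c x
              show p (T (c • x)) = (RingHom.id ℝ) c • p (T x)
              rw [RingHom.id_apply, ← map_smul]
              congr 1
              refine ContinuousLinearMap.ext fun ψ => ?_
              rw [ContinuousLinearMap.smul_apply, hTapp, hTapp]
              refine tendsto_nhds_unique ?_ ((htend x ψ).const_mul c)
              have hfun : (fun E : D => ψ (Λ E (c • x)))
                  = fun E => c * ψ (Λ E x) := by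
                funext E; rw [map_smul, map_smul]; rfl
              exact hfun ▸ htend (c • x) ψ },
    Cp * M₀, fun x => ?_⟩
  have hT : ‖NormedSpace.inclusionInDoubleDual ℝ Y (F x) - T x‖ ≤ M₀ * ‖x‖ := by
    refine ContinuousLinearMap.opNorm_le_bound _ (by positivity) fun ψ => ?_
    have happ : (NormedSpace.inclusionInDoubleDual ℝ Y (F x) - T x) ψ
        = ψ (F x) - myUlim 𝒰 (fun E => ψ (Λ E x)) := by
      rw [ContinuousLinearMap.sub_apply, NormedSpace.dual_def, hTapp]
    rw [happ]
    have ht2 : Filter.Tendsto (fun E : D => ψ (F x) - ψ (Λ E x)) (𝒰 : Filter D)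
        (nhds (ψ (F x) - myUlim 𝒰 (fun E => ψ (Λ E x)))) :=
      tendsto_const_nhds.sub (htend x ψ)
    refine le_of_tendsto ht2.norm ?_
    have hE₀ : FiniteDimensional ℝ (Submodule.span ℝ ({F x} : Set Y)) := inferInstance
    filter_upwards [hev ⟨Submodule.span ℝ ({F x} : Set Y), hE₀⟩] with E hE
    have hfx : u E (F x) = F x :=
      hfix E (F x) (hE (Submodule.mem_span_singleton_self (F x)))
    calc ‖ψ (F x) - ψ (Λ E x)‖ = ‖ψ (u E (F x) - Λ E x)‖ := by rw [map_sub, hfx]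
      _ ≤ ‖ψ‖ * ‖u E (F x) - Λ E x‖ := ψ.le_opNorm _
      _ ≤ ‖ψ‖ * (M₀ * ‖x‖) := mul_le_mul_of_nonneg_left (hbound E x) (norm_nonneg ψ)
      _ = (M₀ * ‖x‖) * ‖ψ‖ := mul_comm _ _
  have hrw : F x - p (T x) = p (NormedSpace.inclusionInDoubleDual ℝ Y (F x) - T x) := by
    have h := map_sub p (NormedSpace.inclusionInDoubleDual ℝ Y (F x)) (T x)
    rw [hp] at h; exact h.symm
  show ‖F x - p (T x)‖ ≤ Cp * M₀ * ‖x‖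
  rw [hrw]
  calc ‖p (NormedSpace.inclusionInDoubleDual ℝ Y (F x) - T x)‖
      ≤ Cp * ‖NormedSpace.inclusionInDoubleDual ℝ Y (F x) - T x‖ := hCp _
    _ ≤ Cp * (M₀ * ‖x‖) := mul_le_mul_of_nonneg_left hT hCp0
    _ = Cp * M₀ * ‖x‖ := by ring
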